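/- In duplication-allowed infinite Mastermind with a countable set Σ of colors, the set of all constant words together with all nearly-constant words (constant except at one position) is a countable winning set: every codeword w ∈ ℕ → Σ is uniquely determined by the Mastermind feedback (correctness count, rearrangement count, inherent error count) to these guesswords. -/

import Mathlib

/-- Permutations of the positions that act only on the incorrect positions of
the guess `s` against the codeword `w` (fixing all correct positions). -/
def IncorrectPerm {α : Type*} (s w : ℕ → α) : Type :=
  {π : Equiv.Perm ℕ // ∀ n : ℕ, s n = w n → π n = n}

instance {α : Type*} (s w : ℕ → α) : Nonempty (IncorrectPerm s w) :=
  ⟨⟨Equiv.refl ℕ, fun _ _ => rfl⟩⟩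

/-- The rearrangement count `ρ`: the greatest cardinal number of incorrect
positions of `s` that can be made correct by a permutation acting only on the
incorrect positions. -/
noncomputable def rearrangeCount {α : Type*} (s w : ℕ → α) : Cardinal :=
  ⨆ π : IncorrectPerm s w,
    Cardinal.mk {m : ℕ | s m ≠ w m ∧ s ((π.1).symm m) = w m}

/-- The inherent error count `ε`: the least cardinal number of positions
remaining incorrect after a permutation acting only on the incorrect
positions. -/
noncomputable def errorCount {α : Type*} (s w : ℕ → α) : Cardinal :=
  ⨅ π : IncorrectPerm s w, Cardinal.mk {m : ℕ | s ((π.1).symm m) ≠ w m}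

/-- The Mastermind feedback `(κ, ρ, ε)` of the guess `s` against the codeword
`w`: the correctness count, the rearrangement count and the inherent error
count. -/
noncomputable def masterFeedback {α : Type*} (s w : ℕ → α) :
    Cardinal × Cardinal × Cardinal :=
  (Cardinal.mk {n : ℕ | s n = w n}, rearrangeCount s w, errorCount s w)

/-- The constant words together with the nearly constant words (constant
except at one position). -/
def ConstNearlyConst (α : Type*) : Set (ℕ → α) :=
  {s | (∃ c : α, s = fun _ => c) ∨
    ∃ (c b : α) (m : ℕ), s = Function.update (fun _ => c) m b}

lemma rho_zero {α : Type*} {c b : α} {n : ℕ} {w : ℕ → α}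
    (hw : w n = b) :
    rearrangeCount (Function.update (fun _ => c) n b) w = 0 := by
  set s := Function.update (fun _ => c) n b with hs
  have hsn : s n = b := by simp [hs]
  have key : ∀ π : IncorrectPerm s w,
      Cardinal.mk {m : ℕ | s m ≠ w m ∧ s ((π.1).symm m) = w m} = 0 := by
    intro π
    have : {m : ℕ | s m ≠ w m ∧ s ((π.1).symm m) = w m} = ∅ := by
      ext m
      simp only [Set.mem_setOf_eq, Set.mem_empty_iff_false, iff_false, not_and]
      intro hm hcontr
      have hπn : π.1 n = n := π.2 n (by rw [hsn, hw])
      have h1 : (π.1).symm m ≠ n := by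
        intro h
        have hmn : m = π.1 n := (Equiv.symm_apply_eq _).mp h
        exact hm (by rw [hmn, hπn, hsn, hw])
      have h2 : s ((π.1).symm m) = c := Function.update_of_ne h1 _ _
      have hmn : m ≠ n := fun h => hm (by rw [h, hsn, hw])
      have h3 : s m = c := Function.update_of_ne hmn _ _
      exact hm (by rw [h3, ← h2, hcontr])
    rw [this]
    simp
  unfold rearrangeCount
  simp only [key]
  exact ciSup_const

lemma rho_pos {α : Type*} {c b : α} {n : ℕ} {w : ℕ → α}
    (hcb : c ≠ b) (hb : ∃ k, w k = b) (hn : w n ≠ b) :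
    rearrangeCount (Function.update (fun _ => c) n b) w ≠ 0 := by
  obtain ⟨k, hk⟩ := hb
  set s := Function.update (fun _ => c) n b with hs
  have hkn : k ≠ n := fun h => hn (h ▸ hk)
  have hsn : s n = b := by simp [hs]
  have hsk : s k = c := Function.update_of_ne hkn _ _
  have hπ : ∀ m, s m = w m → Equiv.swap n k m = m := by
    intro m hm
    apply Equiv.swap_apply_of_ne_of_ne
    · rintro rfl; exact hn (by rw [← hm, hsn])
    · rintro rfl; exact hcb (by rw [← hsk, hm, hk])
  set π : IncorrectPerm s w := ⟨Equiv.swap n k, hπ⟩ with hπdef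
  intro h0
  have hle : Cardinal.mk {m : ℕ | s m ≠ w m ∧ s ((π.1).symm m) = w m}
      ≤ rearrangeCount s w :=
    le_ciSup (Cardinal.bddAbove_range _) π
  rw [h0] at hle
  have hmem : k ∈ {m : ℕ | s m ≠ w m ∧ s ((π.1).symm m) = w m} := by
    constructor
    · rw [hsk, hk]; exact hcb
    · have hsym : (π.1).symm k = n := by
        simp [hπdef, Equiv.symm_swap, Equiv.swap_apply_right]
      rw [hsym, hsn, hk]
  have hne : Cardinal.mk {m : ℕ | s m ≠ w m ∧ s ((π.1).symm m) = w m} ≠ 0 :=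
    Cardinal.mk_ne_zero_iff.mpr ⟨⟨k, hmem⟩⟩
  exact hne (le_antisymm hle zero_le)

/-- In duplication-allowed infinite Mastermind with a countable set of colors,
the constant and nearly-constant words form a countable winning set: every
codeword is uniquely determined by its Mastermind feedback on these
guesswords. -/
theorem mastermind_const_nearlyconst_winning (α : Type*) [Countable α] :
    (ConstNearlyConst α).Countable ∧
      ∀ w w' : ℕ → α,
        (∀ s ∈ ConstNearlyConst α, masterFeedback s w = masterFeedback s w') →
          w = w' := by
  constructor
  · -- countability
    have : ConstNearlyConst α ⊆ Set.range
        (fun p : α ⊕ α × α × ℕ => Sum.elim (fun c => (fun _ => c : ℕ → α))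
          (fun q => Function.update (fun _ => q.1) q.2.2 q.2.1) p) := by
      rintro s (⟨c, rfl⟩ | ⟨c, b, m, rfl⟩)
      · exact ⟨Sum.inl c, rfl⟩
      · exact ⟨Sum.inr ⟨c, b, m⟩, rfl⟩
    exact (Set.countable_range _).mono this
  · intro w w' h
    funext n
    by_cases hsub : ∀ x : α, x = w n
    · exact (hsub (w' n)).symm
    push_neg at hsub
    obtain ⟨c, hc⟩ := hsub
    set b := w n with hb
    -- constant guess `b` shows `b` occurs in `w'`
    have hconst : (fun _ : ℕ => b) ∈ ConstNearlyConst α := Or.inl ⟨b, rfl⟩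
    have h1 := h _ hconst
    have hκ : Cardinal.mk {k : ℕ | (fun _ : ℕ => b) k = w k}
        = Cardinal.mk {k : ℕ | (fun _ : ℕ => b) k = w' k} :=
      congrArg Prod.fst h1
    have hne0 : Cardinal.mk {k : ℕ | (fun _ : ℕ => b) k = w k} ≠ 0 :=
      Cardinal.mk_ne_zero_iff.mpr ⟨⟨n, rfl⟩⟩
    rw [hκ] at hne0
    have hocc : ∃ k, w' k = b := by
      obtain ⟨⟨k, hk⟩⟩ := Cardinal.mk_ne_zero_iff.mp hne0
      exact ⟨k, hk.symm⟩
    -- nearly constant guess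
    have hnc : Function.update (fun _ : ℕ => c) n b ∈ ConstNearlyConst α :=
      Or.inr ⟨c, b, n, rfl⟩
    have h2 := h _ hnc
    have hρ : rearrangeCount (Function.update (fun _ : ℕ => c) n b) w
        = rearrangeCount (Function.update (fun _ : ℕ => c) n b) w' :=
      congrArg (fun p => p.2.1) h2
    rw [rho_zero rfl] at hρ
    by_contra hne'
    exact rho_pos hc hocc (fun hh => hne' hh.symm) hρ.symm
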